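/- For every nonzero a ∈ Z_7 and any power series I(t) = c_1 t + c_2 t^2 + c_3 t^3 + ... over Z_7 with v_7(c_1 − 13·7) ≥ 3, v_7(c_2 + 19·7) ≥ 3, v_7(c_3 + 103) ≥ 3 and v_7(c_m) ≥ −v_7(m) for all m ≥ 4, the value I(7a)/(7^2 a) is congruent to 6 modulo 7; in particular I(7a) ≠ 0, so t = 0 is the only zero of I in 7Z_7. -/

import Mathlib

/-- Let `I(t) = c₁ t + c₂ t² + c₃ t³ + ⋯` be a power series over `ℚ₇` with
`v₇(c₁ − 13·7) ≥ 3`, `v₇(c₂ + 19·7) ≥ 3`, `v₇(c₃ + 103) ≥ 3` and `v₇(c_m) ≥ −v₇(m)`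
for all `m ≥ 4` (stated here via the `7`-adic norm `‖x‖ = 7^{−v₇(x)}`).
Then for every nonzero `a ∈ ℤ₇`, the value `I(7a)/(7² a)` is congruent to `6`
modulo `7`; in particular `I(7a) ≠ 0`, so `t = 0` is the only zero of `I` in `7ℤ₇`. -/
instance : Fact (Nat.Prime 7) := ⟨by norm_num⟩

lemma aux_pow7 : ∀ k : ℕ, k + 4 ≤ 7 ^ (k + 1) := by
  intro k
  induction k with
  | zero => norm_num
  | succ n ih =>
    have h1 : 1 ≤ 7 ^ (n+1) := Nat.one_le_pow _ _ (by norm_num)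
    have h2 : 7 ^ (n+2) = 7 ^ (n+1) * 7 := pow_succ 7 (n+1)
    omega

lemma aux_val (m : ℕ) (hm : 4 ≤ m) : padicValNat 7 m + 3 ≤ m := by
  have h1 : 7 ^ padicValNat 7 m ≤ m :=
    Nat.le_of_dvd (by omega) pow_padicValNat_dvd
  have h2 : m ≤ 7 ^ (m - 3) := by
    have := aux_pow7 (m - 4)
    have h : m - 4 + 1 = m - 3 := by omega
    rw [h] at this; omega
  have h3 : 7 ^ padicValNat 7 m ≤ 7 ^ (m - 3) := le_trans h1 h2
  have := (Nat.pow_le_pow_iff_right (by norm_num : 1 < 7)).mp h3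
  omega

lemma norm_int_one (k : ℤ) (h : ¬ (7:ℤ) ∣ k) : ‖(k : ℚ_[7])‖ = 1 := by
  refine le_antisymm (Padic.norm_int_le_one k) (not_lt.mp ?_)
  rw [Padic.norm_intCast_lt_one_iff]
  exact_mod_cast h


theorem stmt_19 (c : ℕ → ℚ_[7]) (hc0 : c 0 = 0)
    (hc1 : ‖c 1 - 13 * 7‖ ≤ (7 : ℝ) ^ (-3 : ℤ))
    (hc2 : ‖c 2 + 19 * 7‖ ≤ (7 : ℝ) ^ (-3 : ℤ))
    (hc3 : ‖c 3 + 103‖ ≤ (7 : ℝ) ^ (-3 : ℤ))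
    (hcm : ∀ m : ℕ, 4 ≤ m → ‖c m‖ ≤ (7 : ℝ) ^ (padicValNat 7 m : ℤ))
    (a : ℤ_[7]) (ha : a ≠ 0)
    (S : ℚ_[7]) (hS : HasSum (fun m : ℕ => c m * (7 * (a : ℚ_[7])) ^ m) S) :
    ‖S / (7 ^ 2 * (a : ℚ_[7])) - 6‖ ≤ (7 : ℝ)⁻¹ ∧ S ≠ 0 := by
  have h7 : ‖(7 : ℚ_[7])‖ = (7:ℝ)⁻¹ := by
    have := Padic.norm_p (p := 7); simpa using this
  have hA3 : (7:ℝ) ^ (-3 : ℤ) = 1/343 := by norm_num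
  rw [hA3] at hc1 hc2 hc3
  have ha' : (a : ℚ_[7]) ≠ 0 := (PadicInt.coe_ne_zero).mpr ha
  set r : ℝ := ‖(a : ℚ_[7])‖ with hrdef
  have hr : 0 < r := norm_pos_iff.mpr ha'
  have hr1 : r ≤ 1 := by
    rw [hrdef, PadicInt.padic_norm_e_of_padicInt]; exact a.norm_le_one
  set D : ℚ_[7] := 7 ^ 2 * (a : ℚ_[7]) with hDdef
  have h70 : (7 : ℚ_[7]) ≠ 0 := by norm_num
  have hD0 : D ≠ 0 := mul_ne_zero (pow_ne_zero _ h70) ha'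
  have hDnorm : ‖D‖ = (7:ℝ)⁻¹ ^ 2 * r := by
    rw [hDdef, norm_mul, norm_pow, h7]
  have hterm : ∀ m : ℕ, ‖c m * (7 * (a : ℚ_[7])) ^ m / D‖
      = ‖c m‖ * ((7:ℝ)⁻¹ * r) ^ m / ((7:ℝ)⁻¹ ^ 2 * r) := by
    intro m
    rw [norm_div, norm_mul, norm_pow, norm_mul, h7, hDnorm]
  -- the shifted series
  have hg : HasSum (fun m : ℕ => c m * (7 * (a : ℚ_[7])) ^ m / D
      - (if m = 1 then (6:ℚ_[7]) else 0)) (S / D - 6) :=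
    (hS.div_const D).sub (hasSum_ite_eq 1 (6:ℚ_[7]))
  have hbd : ∀ m : ℕ, ‖c m * (7 * (a : ℚ_[7])) ^ m / D
      - (if m = 1 then (6:ℚ_[7]) else 0)‖ ≤ (7:ℝ)⁻¹ := by
    intro m
    match m with
    | 0 => simp [hc0]
    | 1 =>
      rw [if_pos rfl]
      have e1 : c 1 * (7 * (a : ℚ_[7])) ^ 1 / D - 6 = ((c 1 - 13 * 7) + 7 ^ 2) / 7 := by
        rw [hDdef]; field_simp; ring
      rw [e1, norm_div, h7]
      have hb : ‖(c 1 - 13 * 7) + 7 ^ 2‖ ≤ 1/49 := by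
        refine le_trans (Padic.nonarchimedean _ _) (max_le (le_trans hc1 (by norm_num)) ?_)
        rw [norm_pow, h7]; norm_num
      rw [div_inv_eq_mul, mul_comm]
      calc 7 * ‖c 1 - 13 * 7 + 7 ^ 2‖ ≤ 7 * (1/49) := by linarith
        _ ≤ (7:ℝ)⁻¹ := by norm_num
    | 2 =>
      simp only [if_neg (by norm_num : (2:ℕ) ≠ 1), sub_zero]
      rw [hterm 2, mul_div_assoc]
      have hc2' : ‖c 2‖ ≤ 1/7 := by
        have : c 2 = (c 2 + 19 * 7) + (-(19 * 7)) := by ring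
        rw [this]
        refine le_trans (Padic.nonarchimedean _ _) (max_le (le_trans hc2 (by norm_num)) ?_)
        rw [norm_neg, norm_mul, h7]
        have h19 : ‖(19 : ℚ_[7])‖ = 1 := by
          have := norm_int_one 19 (by norm_num)
          simpa using this
        rw [h19]; norm_num
      have e2 : ((7:ℝ)⁻¹ * r) ^ 2 / ((7:ℝ)⁻¹ ^ 2 * r) = r := by
        field_simp
      rw [e2]
      calc ‖c 2‖ * r ≤ (1/7) * 1 := by
            apply mul_le_mul hc2' hr1 hr.le (by norm_num)
        _ = (7:ℝ)⁻¹ := by norm_num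
    | 3 =>
      simp only [if_neg (by norm_num : (3:ℕ) ≠ 1), sub_zero]
      rw [hterm 3, mul_div_assoc]
      have hc3' : ‖c 3‖ ≤ 1 := by
        have : c 3 = (c 3 + 103) + (-(103)) := by ring
        rw [this]
        refine le_trans (Padic.nonarchimedean _ _) (max_le (le_trans hc3 (by norm_num)) ?_)
        rw [norm_neg]
        have h103 : ‖(103 : ℚ_[7])‖ = 1 := by
          have := norm_int_one 103 (by norm_num)
          simpa using this
        rw [h103]
      have e3 : ((7:ℝ)⁻¹ * r) ^ 3 / ((7:ℝ)⁻¹ ^ 2 * r) = r ^ 2 / 7 := by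
        field_simp
      rw [e3]
      have : r ^ 2 ≤ 1 := pow_le_one₀ hr.le hr1
      calc ‖c 3‖ * (r ^ 2 / 7) ≤ 1 * (1 / 7) := by
            apply mul_le_mul hc3' (by linarith) (by positivity) (by norm_num)
        _ = (7:ℝ)⁻¹ := by norm_num
    | (n+4) =>
      set m := n + 4 with hmdef
      have hm4 : 4 ≤ m := by omega
      simp only [if_neg (by omega : m ≠ 1), sub_zero]
      rw [hterm m, mul_div_assoc]
      have hv : padicValNat 7 m + 3 ≤ m := aux_val m hm4
      have hcm' : ‖c m‖ ≤ (7:ℝ) ^ (m - 3 : ℕ) := by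
        refine le_trans (hcm m hm4) ?_
        rw [← zpow_natCast (7:ℝ) (m-3)]
        exact zpow_le_zpow_right₀ (by norm_num) (by omega)
      have hXpos : (0:ℝ) ≤ ((7:ℝ)⁻¹ * r) ^ m / ((7:ℝ)⁻¹ ^ 2 * r) := by positivity
      calc ‖c m‖ * (((7:ℝ)⁻¹ * r) ^ m / ((7:ℝ)⁻¹ ^ 2 * r))
          ≤ (7:ℝ) ^ (m - 3 : ℕ) * (((7:ℝ)⁻¹ * r) ^ m / ((7:ℝ)⁻¹ ^ 2 * r)) := by
            exact mul_le_mul_of_nonneg_right hcm' hXpos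
        _ = (7:ℝ)⁻¹ * r ^ (m - 1 : ℕ) := by
            have hk : m - 3 = n + 1 := by omega
            have hk1 : m - 1 = n + 3 := by omega
            rw [hk, hk1, hmdef]
            field_simp
            ring_nf
            rw [mul_assoc, ← mul_pow]; norm_num
        _ ≤ (7:ℝ)⁻¹ * 1 := by
            refine mul_le_mul_of_nonneg_left (pow_le_one₀ hr.le hr1) (by norm_num)
        _ = (7:ℝ)⁻¹ := by norm_num
  have hmain : ‖S / D - 6‖ ≤ (7:ℝ)⁻¹ := by
    rw [← hg.tsum_eq]
    exact IsUltrametricDist.norm_tsum_le_of_forall_le_of_nonneg (by norm_num) hbd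
  refine ⟨hmain, ?_⟩
  intro h0
  rw [h0] at hmain
  have h6 : ‖(6 : ℚ_[7])‖ = 1 := by
    have := norm_int_one 6 (by norm_num)
    simpa using this
  rw [zero_div, zero_sub, norm_neg, h6] at hmain
  norm_num at hmain
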